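/- Let P be a finite poset whose Hasse diagram is a tree and let h = h(P). Then the union of any h distinct levels of the poset Mon(ℤ) of eventually monotone functions contains P as a subposet; consequently l(P) = h(P) - 1. -/

import Mathlib

/-- `Mon(ℤ)`: eventually monotone 0–1 functions on `ℤ` — functions `f : ℤ → Bool` with
`f n = true` for all large `n` and `f n = false` for all small `n`, ordered pointwise. -/
def MonZ : Type :=
  {f : ℤ → Bool // (∃ N : ℤ, ∀ n ≥ N, f n = true) ∧ (∃ N : ℤ, ∀ n ≤ N, f n = false)}

noncomputable instance : PartialOrder MonZ := Subtype.partialOrder _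

/-- `Σ_n (f(n) - g(n))`, a well-defined integer for `f, g ∈ Mon(ℤ)` (the summand has
finite support). -/
noncomputable def MonZ.diff (f g : MonZ) : ℤ :=
  ∑ᶠ n : ℤ, ((if f.1 n then (1 : ℤ) else 0) - (if g.1 n then (1 : ℤ) else 0))

/-- A level of `Mon(ℤ)`: a maximal subfamily on which `Σ_n (f(n)-g(n)) = 0` for all
pairs. -/
def IsLevel (L : Set MonZ) : Prop :=
  (∀ f ∈ L, ∀ g ∈ L, MonZ.diff f g = 0) ∧
    ∀ L' : Set MonZ, L ⊆ L' → (∀ f ∈ L', ∀ g ∈ L', MonZ.diff f g = 0) → L' = L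

/-- A finite poset has height `h` if `h` is the maximum number of elements of a chain. -/
def HasHeight (α : Type*) [Preorder α] (h : ℕ) : Prop :=
  (∃ c : Finset α, IsChain (· ≤ ·) (c : Set α) ∧ c.card = h) ∧
    ∀ c : Finset α, IsChain (· ≤ ·) (c : Set α) → c.card ≤ h

namespace MonZ

def ind (f : MonZ) (n : ℤ) : ℤ := if f.1 n then 1 else 0

lemma diff_def (f g : MonZ) : diff f g = ∑ᶠ n : ℤ, (ind f n - ind g n) := rfl

/-- every pair has a common "window" -/
lemma exists_window (f g k : MonZ) : ∃ A B : ℤ,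
    (∀ n ≤ A, f.1 n = false ∧ g.1 n = false ∧ k.1 n = false) ∧
    (∀ n ≥ B, f.1 n = true ∧ g.1 n = true ∧ k.1 n = true) := by
  obtain ⟨⟨Nf, hNf⟩, ⟨Mf, hMf⟩⟩ := f.2
  obtain ⟨⟨Ng, hNg⟩, ⟨Mg, hMg⟩⟩ := g.2
  obtain ⟨⟨Nk, hNk⟩, ⟨Mk, hMk⟩⟩ := k.2
  exact ⟨min Mf (min Mg Mk), max Nf (max Ng Nk),
    fun n hn => ⟨hMf n (le_trans hn (min_le_left _ _)),
      hMg n (le_trans hn (le_trans (min_le_right _ _) (min_le_left _ _))),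
      hMk n (le_trans hn (le_trans (min_le_right _ _) (min_le_right _ _)))⟩,
    fun n hn => ⟨hNf n (le_trans (le_max_left _ _) hn),
      hNg n (le_trans (le_trans (le_max_left _ _) (le_max_right _ _)) hn),
      hNk n (le_trans (le_trans (le_max_right _ _) (le_max_right _ _)) hn)⟩⟩

lemma diff_eq_sum (f g : MonZ) {A B : ℤ}
    (hA : ∀ n ≤ A, f.1 n = false ∧ g.1 n = false)
    (hB : ∀ n ≥ B, f.1 n = true ∧ g.1 n = true) :
    diff f g = ∑ n ∈ Finset.Ioo A B, (ind f n - ind g n) := by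
  rw [diff_def]
  apply finsum_eq_sum_of_support_subset
  intro n hn
  simp only [Function.mem_support, Ne] at hn
  simp only [Finset.coe_Ioo, Set.mem_Ioo]
  by_contra hcon
  push_neg at hcon
  rcases le_or_gt n A with h1 | h1
  · obtain ⟨e1, e2⟩ := hA n h1
    exact hn (by simp [ind, e1, e2])
  · obtain ⟨e1, e2⟩ := hB n (hcon h1)
    exact hn (by simp [ind, e1, e2])

lemma diff_add_diff (f g k : MonZ) : diff f g + diff g k = diff f k := by
  obtain ⟨A, B, hA, hB⟩ := exists_window f g k
  rw [diff_eq_sum f g (fun n hn => ⟨(hA n hn).1, (hA n hn).2.1⟩)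
      (fun n hn => ⟨(hB n hn).1, (hB n hn).2.1⟩),
    diff_eq_sum g k (fun n hn => ⟨(hA n hn).2.1, (hA n hn).2.2⟩)
      (fun n hn => ⟨(hB n hn).2.1, (hB n hn).2.2⟩),
    diff_eq_sum f k (fun n hn => ⟨(hA n hn).1, (hA n hn).2.2⟩)
      (fun n hn => ⟨(hB n hn).1, (hB n hn).2.2⟩),
    ← Finset.sum_add_distrib]
  apply Finset.sum_congr rfl
  intros; ring

lemma diff_self (f : MonZ) : diff f f = 0 := by
  have := diff_add_diff f f f; linarith

lemma diff_comm (f g : MonZ) : diff f g = - diff g f := by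
  have := diff_add_diff f g f; have := diff_self f; linarith

lemma ind_le_ind_of_le {f g : MonZ} (h : f ≤ g) (n : ℤ) : ind f n ≤ ind g n := by
  have hb : f.1 n ≤ g.1 n := h n
  simp only [ind]
  cases hf : f.1 n
  · positivity
  · rw [hf] at hb
    have : g.1 n = true := by
      cases hg : g.1 n
      · rw [hg] at hb; exact absurd hb (by simp)
      · rfl
    simp [this]

lemma diff_nonneg {f g : MonZ} (h : g ≤ f) : 0 ≤ diff f g := by
  obtain ⟨A, B, hA, hB⟩ := exists_window f g g
  rw [diff_eq_sum f g (fun n hn => ⟨(hA n hn).1, (hA n hn).2.1⟩)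
      (fun n hn => ⟨(hB n hn).1, (hB n hn).2.1⟩)]
  apply Finset.sum_nonneg
  intro n _
  have := ind_le_ind_of_le h n
  linarith

lemma eq_of_le_of_diff_eq_zero {f g : MonZ} (h : f ≤ g) (hd : diff g f = 0) : f = g := by
  obtain ⟨A, B, hA, hB⟩ := exists_window g f f
  rw [diff_eq_sum g f (fun n hn => ⟨(hA n hn).1, (hA n hn).2.1⟩)
      (fun n hn => ⟨(hB n hn).1, (hB n hn).2.1⟩)] at hd
  have hall : ∀ n ∈ Finset.Ioo A B, ind g n - ind f n = 0 := by
    intro n hn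
    have h1 : ∀ m ∈ Finset.Ioo A B, 0 ≤ ind g m - ind f m := by
      intro m _; have := ind_le_ind_of_le h m; linarith
    have := (Finset.sum_eq_zero_iff_of_nonneg h1).mp hd n hn
    linarith [this]
  apply Subtype.ext
  funext n
  rcases le_or_gt n A with h1 | h1
  · rw [(hA n h1).1, (hA n h1).2.1]
  · rcases le_or_gt B n with h2 | h2
    · rw [(hB n h2).1, (hB n h2).2.1]
    · have := hall n (Finset.mem_Ioo.mpr ⟨h1, h2⟩)
      simp only [ind] at this
      cases hf : f.1 n <;> cases hg : g.1 n <;> simp [hf, hg] at this ⊢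

end MonZ

namespace MonZ

lemma exists_lb (G : Finset ℤ) : ∃ m : ℤ, ∀ x ∈ G, m < x := by
  classical
  induction G using Finset.induction with
  | empty => exact ⟨0, by simp⟩
  | @insert a s _ ih =>
    obtain ⟨m, hm⟩ := ih
    refine ⟨min m (a - 1), ?_⟩
    intro x hx
    rcases Finset.mem_insert.mp hx with rfl | hx
    · have := min_le_right m (x - 1); omega
    · have := hm x hx; have := min_le_left m (a-1); omega

open Classical in
/-- Explicit element: indicator of `F ∪ [K,∞)`. -/
noncomputable def E (K : ℤ) (F : Finset ℤ) : MonZ :=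
  ⟨fun n => decide (K ≤ n) || decide (n ∈ F),
    ⟨K, fun n hn => by simp [hn]⟩,
    by
      obtain ⟨m, hm⟩ := exists_lb F
      refine ⟨min K m - 1, ?_⟩
      intro n hn
      have h1 : ¬ (K ≤ n) := by have := min_le_left K m; omega
      have h2 : n ∉ F := fun hmem => by have := hm n hmem; have := min_le_right K m; omega
      simp [h1, h2]⟩

lemma E_apply (K : ℤ) (F : Finset ℤ) (n : ℤ) :
    (E K F).1 n = (decide (K ≤ n) || decide (n ∈ F)) := rfl

lemma E_mono {K : ℤ} {F F' : Finset ℤ} (h : F ⊆ F') : E K F ≤ E K F' := by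
  intro n
  simp only [E_apply]
  cases hd : decide (K ≤ n) with
  | false =>
    cases hm : decide (n ∈ F) with
    | false => simp
    | true => simp only [Bool.false_or]
              have : n ∈ F' := h (by simpa using hm)
              simp [this]
  | true => simp

lemma E_inj {K : ℤ} {F F' : Finset ℤ} (hF : ∀ x ∈ F, x < K) (hF' : ∀ x ∈ F', x < K)
    (h : E K F = E K F') : F = F' := by
  ext n
  constructor <;> intro hn
  · have := congrFun (congrArg Subtype.val h) n
    simp only [E_apply] at this
    have h1 : ¬ (K ≤ n) := by have := hF n hn; omega
    simp [h1, hn] at this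
    simpa using this
  · have := congrFun (congrArg Subtype.val h) n
    simp only [E_apply] at this
    have h1 : ¬ (K ≤ n) := by have := hF' n hn; omega
    simp [h1, hn] at this
    simpa using this

lemma diff_E_E {K : ℤ} {F F' : Finset ℤ} (hF : ∀ x ∈ F, x < K) (hF' : ∀ x ∈ F', x < K) :
    diff (E K F) (E K F') = F.card - F'.card := by
  classical
  -- window
  obtain ⟨A, B, hA, hB⟩ := exists_window (E K F) (E K F') (E K F')
  -- enlarge window to contain F ∪ F'
  obtain ⟨m, hm⟩ := exists_lb (F ∪ F')
  set A' : ℤ := min A m with hA'def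
  have hAle : A' ≤ A := min_le_left _ _
  have hFA : ∀ x ∈ F ∪ F', A' < x := by
    intro x hx
    have := hm x hx
    have := min_le_right A m
    omega
  have hA2 : ∀ n ≤ A', (E K F).1 n = false ∧ (E K F').1 n = false := by
    intro n hn
    exact ⟨(hA n (le_trans hn hAle)).1, (hA n (le_trans hn hAle)).2.1⟩
  set B' : ℤ := max B K with hB'def
  have hB2 : ∀ n ≥ B', (E K F).1 n = true ∧ (E K F').1 n = true := by
    intro n hn
    have : K ≤ n := le_trans (le_max_right B K) hn
    constructor <;> simp [E_apply, this]
  rw [diff_eq_sum _ _ hA2 hB2]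
  have hsub : ∀ (G : Finset ℤ), (∀ x ∈ G, x < K) → G ⊆ F ∪ F' → G ⊆ Finset.Ioo A' B' := by
    intro G hG hGsub x hx
    rw [Finset.mem_Ioo]
    refine ⟨hFA x (hGsub hx), ?_⟩
    have := hG x hx
    have : x < K := this
    have hk : K ≤ B' := le_max_right B K
    omega
  have key : ∀ n ∈ Finset.Ioo A' B', ind (E K F) n - ind (E K F') n
      = (if n ∈ F then (1:ℤ) else 0) - (if n ∈ F' then (1:ℤ) else 0) := by
    intro n hn
    rcases le_or_gt K n with hk | hk
    · have h1 : n ∉ F := fun hm => absurd (hF n hm) (by omega)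
      have h2 : n ∉ F' := fun hm => absurd (hF' n hm) (by omega)
      simp [ind, E_apply, hk, h1, h2]
    · have h1 : ¬ (K ≤ n) := by omega
      simp [ind, E_apply, h1]
  rw [Finset.sum_congr rfl key, Finset.sum_sub_distrib]
  rw [Finset.sum_boole, Finset.sum_boole]
  have e1 : Finset.Ioo A' B' ∩ F = F := by
    apply Finset.inter_eq_right.mpr
    exact hsub F hF Finset.subset_union_left
  have e2 : Finset.Ioo A' B' ∩ F' = F' := by
    apply Finset.inter_eq_right.mpr
    exact hsub F' hF' Finset.subset_union_right
  rw [Finset.filter_mem_eq_inter, Finset.filter_mem_eq_inter] at *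
  rw [e1, e2]

lemma diff_E_E_K {K K' : ℤ} (h : K ≤ K') : diff (E K ∅) (E K' ∅) = K' - K := by
  classical
  have hA : ∀ n ≤ K - 1, (E K ∅).1 n = false ∧ (E K' ∅).1 n = false := by
    intro n hn
    constructor <;> simp [E_apply] <;> omega
  have hB : ∀ n ≥ K', (E K ∅).1 n = true ∧ (E K' ∅).1 n = true := by
    intro n hn
    constructor <;> simp [E_apply] <;> omega
  rw [diff_eq_sum _ _ hA hB]
  have key : ∀ n ∈ Finset.Ioo (K-1) K', ind (E K ∅) n - ind (E K' ∅) n = 1 := by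
    intro n hn
    rw [Finset.mem_Ioo] at hn
    have h1 : K ≤ n := by omega
    have h2 : ¬ (K' ≤ n) := by omega
    simp [ind, E_apply, h1, h2]
  rw [Finset.sum_congr rfl key, Finset.sum_const, nsmul_eq_mul, mul_one]
  rw [Int.card_Ioo]
  omega

end MonZ

namespace MonZ

noncomputable def base : MonZ := E 0 ∅

lemma diff_E_empty (K K' : ℤ) : diff (E K ∅) (E K' ∅) = K' - K := by
  rcases le_total K K' with h | h
  · exact diff_E_E_K h
  · have := diff_E_E_K h
    have := diff_comm (E K ∅) (E K' ∅)
    omega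

def Lev (k : ℤ) : Set MonZ := {f | diff f base = k}

lemma mem_Lev {f : MonZ} {k : ℤ} : f ∈ Lev k ↔ diff f base = k := Iff.rfl

lemma Lev_nonempty (k : ℤ) : (E (-k) ∅) ∈ Lev k := by
  rw [mem_Lev, base, diff_E_empty]; ring

lemma isLevel_Lev (k : ℤ) : IsLevel (Lev k) := by
  constructor
  · intro f hf g hg
    rw [mem_Lev] at hf hg
    have h1 := diff_add_diff f g base
    have h2 := hf
    omega
  · intro L' hsub hprop
    apply Set.eq_of_subset_of_subset _ hsub
    intro f hf
    have hg := Lev_nonempty k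
    have := hprop f hf (E (-k) ∅) (hsub hg)
    rw [mem_Lev]
    have h1 := diff_add_diff f (E (-k) ∅) base
    have h2 := (mem_Lev.mp hg)
    omega

lemma level_eq_Lev {L : Set MonZ} (hL : IsLevel L) {g : MonZ} (hg : g ∈ L) :
    L = Lev (diff g base) := by
  set k := diff g base
  have hsub : L ⊆ Lev k := by
    intro f hf
    rw [mem_Lev]
    have := hL.1 f hf g hg
    have := diff_add_diff f g base
    omega
  have := (isLevel_Lev k).2 L  -- wrong direction; use maximality of L on Lev k? no
  -- use maximality of L applied to Lev k
  have := hL.2 (Lev k) hsub (isLevel_Lev k).1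
  exact this.symm

lemma level_nonempty {L : Set MonZ} (hL : IsLevel L) : ∃ g, g ∈ L := by
  by_contra hemp
  push_neg at hemp
  have hsub : L ⊆ Lev 0 := fun f hf => absurd hf (hemp f)
  have := hL.2 (Lev 0) hsub (isLevel_Lev 0).1
  exact hemp _ (this ▸ Lev_nonempty 0)

lemma level_antichain {L : Set MonZ} (hL : IsLevel L) {f g : MonZ}
    (hf : f ∈ L) (hg : g ∈ L) (hle : f ≤ g) : f = g :=
  eq_of_le_of_diff_eq_zero hle (hL.1 g hg f hf)

end MonZ


lemma part2 (α : Type) [Fintype α] [PartialOrder α] [Nonempty α] (h : ℕ)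
    (hh : HasHeight α h) :
    (∃ L : Fin (h - 1) → Set MonZ, (∀ i, IsLevel (L i)) ∧ Function.Injective L ∧
      ¬ ∃ f : α → MonZ, Function.Injective f ∧ (∀ a, f a ∈ ⋃ i, L i) ∧
        ∀ a b : α, a ≤ b → f a ≤ f b) := by
  classical
  have hpos : 1 ≤ h := by
    obtain ⟨a⟩ := ‹Nonempty α›
    have := hh.2 {a} (by simp [IsChain, Set.Pairwise])
    simpa using this
  refine ⟨fun i => MonZ.Lev i.val, fun i => MonZ.isLevel_Lev _, ?_, ?_⟩
  · intro i j hij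
    simp only at hij
    have hi := MonZ.Lev_nonempty (i.val : ℤ)
    rw [hij] at hi
    have h1 := MonZ.mem_Lev.mp hi
    have h2 : MonZ.diff (MonZ.E (-(i.val : ℤ)) ∅) MonZ.base = (i.val : ℤ) :=
      MonZ.mem_Lev.mp (MonZ.Lev_nonempty _)
    have : ((i.val : ℤ)) = (j.val : ℤ) := by omega
    exact Fin.ext (by exact_mod_cast this)
  · rintro ⟨f, finj, fmem, fmono⟩
    obtain ⟨c, hc, hcard⟩ := hh.1
    have hℓ : ∀ a : α, ∃ i : Fin (h-1), f a ∈ MonZ.Lev i.val := by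
      intro a
      simpa using Set.mem_iUnion.mp (fmem a)
    choose ℓ hℓ using hℓ
    have hmaps : ∀ a ∈ c, ℓ a ∈ (Finset.univ : Finset (Fin (h-1))) := by
      intros; exact Finset.mem_univ _
    have hcardlt : (Finset.univ : Finset (Fin (h-1))).card < c.card := by
      rw [hcard, Finset.card_univ, Fintype.card_fin]
      omega
    obtain ⟨a, ha, b, hb, hab, heq⟩ :=
      Finset.exists_ne_map_eq_of_card_lt_of_maps_to hcardlt hmaps
    have hcomp : a ≤ b ∨ b ≤ a := hc.total ha hb
    have hfab : f a = f b := by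
      rcases hcomp with hle | hle
      · exact MonZ.level_antichain (MonZ.isLevel_Lev (ℓ a).val) (hℓ a)
          (heq ▸ hℓ b) (fmono a b hle)
      · exact (MonZ.level_antichain (MonZ.isLevel_Lev (ℓ a).val) (heq ▸ hℓ b) (hℓ a)
          (fmono b a hle)).symm
    exact hab (finj hfab)


open SimpleGraph

variable {V : Type} {G : SimpleGraph V}

namespace TreeAux

noncomputable def tpath (ht : G.IsTree) (r v : V) : G.Walk r v :=
  (ht.existsUnique_path r v).choose

lemma tpath_isPath (ht : G.IsTree) (r v : V) : (tpath ht r v).IsPath :=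
  (ht.existsUnique_path r v).choose_spec.1

lemma tpath_unique (ht : G.IsTree) {r v : V} (p : G.Walk r v) (hp : p.IsPath) :
    p = tpath ht r v :=
  (ht.existsUnique_path r v).choose_spec.2 p hp

noncomputable def d (ht : G.IsTree) (r v : V) : ℕ := (tpath ht r v).length

lemma d_root (ht : G.IsTree) (r : V) : d ht r r = 0 := by
  have : (Walk.nil : G.Walk r r) = tpath ht r r := tpath_unique ht _ Walk.IsPath.nil
  simp [d, ← this]

lemma eq_root_of_d_eq_zero (ht : G.IsTree) {r v : V} (h : d ht r v = 0) : r = v :=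
  Walk.eq_of_length_eq_zero h

lemma dich (ht : G.IsTree) (r : V) {u v : V} (huv : G.Adj u v) :
    (tpath ht r v = (tpath ht r u).concat huv) ∨
    (tpath ht r u = (tpath ht r v).concat huv.symm) := by
  classical
  by_cases hv : v ∈ (tpath ht r u).support
  · right
    have hsplit := (tpath ht r u).take_spec hv
    have htake : ((tpath ht r u).takeUntil v hv).IsPath :=
      (tpath_isPath ht r u).takeUntil hv
    have hdrop : ((tpath ht r u).dropUntil v hv).IsPath :=
      (tpath_isPath ht r u).dropUntil hv
    have h1 : (tpath ht r u).takeUntil v hv = tpath ht r v := tpath_unique ht _ htake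
    have h2 : (tpath ht r u).dropUntil v hv = Walk.cons huv.symm Walk.nil := by
      have hsing : (Walk.cons huv.symm Walk.nil : G.Walk v u).IsPath :=
        (Path.singleton huv.symm).2
      have e1 := tpath_unique ht _ hdrop
      have e2 := tpath_unique ht _ hsing
      rw [e1, e2]
    rw [← hsplit, h1, h2, Walk.concat_eq_append]
  · left
    have hpath : ((tpath ht r u).concat huv).IsPath := by
      rw [← Walk.isPath_reverse_iff, Walk.reverse_concat, Walk.cons_isPath_iff]
      refine ⟨(Walk.isPath_reverse_iff _).mpr (tpath_isPath ht r u), ?_⟩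
      rw [Walk.support_reverse, List.mem_reverse]
      exact hv
    exact (tpath_unique ht _ hpath).symm

lemma adj_d (ht : G.IsTree) (r : V) {u v : V} (huv : G.Adj u v) :
    d ht r v = d ht r u + 1 ∨ d ht r u = d ht r v + 1 := by
  rcases dich ht r huv with h | h
  · left; rw [d, d, h, Walk.length_concat]
  · right; rw [d, d, h, Walk.length_concat]

noncomputable def parent (ht : G.IsTree) (r v : V) : V :=
  (tpath ht r v).reverse.getVert 1

lemma parent_eq (ht : G.IsTree) (r : V) {u v : V} (huv : G.Adj u v)
    (hd : d ht r u < d ht r v) : u = parent ht r v ∧ d ht r u + 1 = d ht r v := by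
  rcases dich ht r huv with h | h
  · constructor
    · rw [parent, h, Walk.reverse_concat, Walk.getVert_cons_succ, Walk.getVert_zero]
    · rw [d, d, h, Walk.length_concat]
  · exfalso
    have : d ht r u = d ht r v + 1 := by rw [d, d, h, Walk.length_concat]
    omega

lemma parent_spec (ht : G.IsTree) {r v : V} (hv : v ≠ r) :
    G.Adj (parent ht r v) v ∧ d ht r (parent ht r v) + 1 = d ht r v := by
  have hlen : (tpath ht r v).length ≠ 0 := by
    intro h0
    exact hv (Walk.eq_of_length_eq_zero h0).symm
  have hnn : ¬ (tpath ht r v).reverse.Nil := by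
    rw [Walk.nil_iff_length_eq, Walk.length_reverse]
    exact hlen
  obtain ⟨u, huv, q, hq⟩ := Walk.not_nil_iff.mp hnn
  -- (tpath ht r v).reverse = cons huv q   with huv : G.Adj v u, q : G.Walk u r
  have hρ : tpath ht r v = q.reverse.concat huv.symm := by
    have := congrArg Walk.reverse hq
    rw [Walk.reverse_reverse, Walk.reverse_cons] at this
    exact this
  have hqpath : q.reverse.IsPath := by
    have h1 : (tpath ht r v).reverse.IsPath :=
      (Walk.isPath_reverse_iff _).mpr (tpath_isPath ht r v)
    rw [hq, Walk.cons_isPath_iff] at h1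
    exact (Walk.isPath_reverse_iff _).mpr h1.1
  have hqu : q.reverse = tpath ht r u := tpath_unique ht _ hqpath
  have hadj : G.Adj u v := huv.symm
  have hdu : d ht r v = d ht r u + 1 := by
    rw [d, d, hρ, Walk.length_concat, hqu]
  have := parent_eq ht r hadj (by omega)
  rcases this with ⟨he, hd⟩
  rw [← he]
  exact ⟨hadj, by omega⟩

lemma parent_unique (ht : G.IsTree) {r u v : V} (huv : G.Adj u v)
    (hd : d ht r u ≤ d ht r v) : u = parent ht r v :=
  (parent_eq ht r huv (by rcases adj_d ht r huv with h | h <;> omega)).1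

end TreeAux

section Build

variable {α : Type} [Fintype α] [PartialOrder α]

open TreeAux

lemma exists_lb' (G : Finset ℤ) : ∃ m : ℤ, m ≤ 0 ∧ ∀ x ∈ G, m < x := by
  classical
  induction G using Finset.induction with
  | empty => exact ⟨-1, by omega, by simp⟩
  | @insert a s _ ih =>
    obtain ⟨m, hm0, hm⟩ := ih
    refine ⟨min m (a - 1), by omega, ?_⟩
    intro x hx
    rcases Finset.mem_insert.mp hx with rfl | hx
    · have := min_le_right m (x - 1); omega
    · have := hm x hx; have := min_le_left m (a-1); omega

lemma build (htree : (hasse α).IsTree) (r : α) (sz : α → ℕ)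
    (hsz1 : ∀ a : α, Fintype.card α + 1 ≤ sz a)
    (hsz2 : ∀ a b : α, a ⋖ b → sz a < sz b) :
    ∀ s : Finset α, (∀ v ∈ s, v ≠ r → parent htree r v ∈ s) →
    ∃ F : α → Finset ℤ,
      (∀ a ∈ s, (∀ x ∈ F a, x < 0) ∧ (F a).card = sz a) ∧
      (∀ a ∈ s, ∀ b ∈ s, a ⋖ b → F a ⊆ F b) ∧
      (∀ a ∈ s, ∀ b ∈ s, F a = F b → a = b) := by
  classical
  intro s
  induction s using Finset.strongInduction with
  | _ s IH =>
  intro hgood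
  rcases Finset.eq_empty_or_nonempty s with rfl | hne
  · exact ⟨fun _ => ∅, by simp, by simp, by simp⟩
  obtain ⟨v, hv, hvmax⟩ := Finset.exists_max_image s (d htree r) hne
  set s' := s.erase v with hs'
  have hss : s' ⊂ s := Finset.erase_ssubset hv
  have hgood' : ∀ w ∈ s', w ≠ r → parent htree r w ∈ s' := by
    intro w hw hwr
    have hws : w ∈ s := Finset.mem_of_mem_erase hw
    have hp : parent htree r w ∈ s := hgood w hws hwr
    have hdp : d htree r (parent htree r w) + 1 = d htree r w :=
      (parent_spec htree hwr).2
    refine Finset.mem_erase.mpr ⟨?_, hp⟩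
    intro heq
    have := hvmax w hws
    rw [heq] at hdp
    omega
  obtain ⟨F', hF1, hF2, hF3⟩ := IH s' hss hgood'
  by_cases hvr : v = r
  · -- then s = {v}
    have hsv : s = {v} := by
      apply Finset.eq_singleton_iff_unique_mem.mpr
      refine ⟨hv, ?_⟩
      intro w hw
      by_contra hwv
      have hwr : w ≠ r := fun h => hwv (h.trans hvr.symm)
      have hdw := (parent_spec htree hwr).2
      have h0 : d htree r v = 0 := hvr ▸ d_root htree r
      have := hvmax w hw
      omega
    subst hsv
    refine ⟨fun a => (Finset.range (sz a)).image (fun j : ℕ => (-1 : ℤ) - j), ?_, ?_, ?_⟩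
    · intro a _
      constructor
      · intro x hx
        simp only [Finset.mem_image, Finset.mem_range] at hx
        obtain ⟨j, _, rfl⟩ := hx
        omega
      · rw [Finset.card_image_of_injective _ (fun i j hij => by omega), Finset.card_range]
    · intro a ha b hb hab
      rw [Finset.mem_singleton] at ha hb
      subst ha; subst hb
      exact absurd hab.lt (lt_irrefl _)
    · intro a ha b hb _
      rw [Finset.mem_singleton] at ha hb
      rw [ha, hb]
  · -- v ≠ r : parent u exists
    set u := parent htree r v with hu
    have hspec := parent_spec htree hvr
    have hus : u ∈ s' := by
      have hp : u ∈ s := hgood v hv hvr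
      refine Finset.mem_erase.mpr ⟨?_, hp⟩
      intro heq
      have := hspec.2
      rw [← hu, heq] at this
      omega
    have huadj : (hasse α).Adj u v := hspec.1
    have huniq : ∀ w ∈ s', (hasse α).Adj w v → w = u := by
      intro w hw hadj
      exact parent_unique htree hadj (hvmax w (Finset.mem_of_mem_erase hw))
    have hvnotadj : ∀ w ∈ s', (hasse α).Adj v w → w = u := by
      intro w hw hadj
      exact huniq w hw hadj.symm
    -- used elements
    set used : Finset ℤ := s'.biUnion (fun w => F' w) with hused
    rcases huadj with hcov | hcov
    · -- u ⋖ v : go up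
      obtain ⟨m, hm0, hm⟩ := exists_lb' used
      have hgap : sz u < sz v := hsz2 u v hcov
      set fresh : Finset ℤ := (Finset.range (sz v - sz u)).image (fun j : ℕ => m - 1 - j)
        with hfresh
      have hfresh_neg : ∀ x ∈ fresh, x < 0 := by
        intro x hx
        simp only [hfresh, Finset.mem_image, Finset.mem_range] at hx
        obtain ⟨j, _, rfl⟩ := hx
        omega
      have hfresh_new : ∀ x ∈ fresh, x ∉ used := by
        intro x hx hxu
        have := hm x hxu
        simp only [hfresh, Finset.mem_image, Finset.mem_range] at hx
        obtain ⟨j, _, rfl⟩ := hx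
        omega
      have hfresh_card : fresh.card = sz v - sz u := by
        rw [hfresh, Finset.card_image_of_injective _ (fun i j hij => by omega),
          Finset.card_range]
      have hFusub : ∀ w ∈ s', ∀ x ∈ F' w, x ∈ used := by
        intro w hw x hx
        exact Finset.mem_biUnion.mpr ⟨w, hw, hx⟩
      set Fv : Finset ℤ := F' u ∪ fresh with hFv
      set F : α → Finset ℤ := Function.update F' v Fv with hF
      have hFs' : ∀ w ∈ s', F w = F' w := by
        intro w hw
        have : w ≠ v := Finset.ne_of_mem_erase hw
        simp [hF, Function.update_of_ne this]
      have hFvv : F v = Fv := by simp [hF]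
      have hdisj : Disjoint (F' u) fresh := by
        rw [Finset.disjoint_right]
        intro x hx
        exact fun hxu => hfresh_new x hx (hFusub u hus x hxu)
      refine ⟨F, ?_, ?_, ?_⟩
      · intro a ha
        rcases eq_or_ne v a with rfl | hav
        · rw [hFvv]
          constructor
          · intro x hx
            rcases Finset.mem_union.mp hx with hx | hx
            · exact (hF1 u hus).1 x hx
            · exact hfresh_neg x hx
          · rw [Finset.card_union_of_disjoint hdisj, hfresh_card, (hF1 u hus).2]
            omega
        · have ha' : a ∈ s' := Finset.mem_erase.mpr ⟨Ne.symm hav, ha⟩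
          rw [hFs' a ha']
          exact hF1 a ha'
      · intro a ha b hb hab
        rcases eq_or_ne v a with rfl | hav
        · rcases eq_or_ne v b with rfl | hbv
          · exact absurd hab.lt (lt_irrefl _)
          · have hb' : b ∈ s' := Finset.mem_erase.mpr ⟨Ne.symm hbv, hb⟩
            have : b = u := hvnotadj b hb' (Or.inl hab)
            subst this
            exact absurd (hab.lt.trans hcov.lt) (lt_irrefl _)
        · have ha' : a ∈ s' := Finset.mem_erase.mpr ⟨Ne.symm hav, ha⟩
          rcases eq_or_ne v b with rfl | hbv
          · have hau : a = u := huniq a ha' (Or.inl hab)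
            rw [hFs' a ha', hFvv, hau]
            exact Finset.subset_union_left
          · have hb' : b ∈ s' := Finset.mem_erase.mpr ⟨Ne.symm hbv, hb⟩
            rw [hFs' a ha', hFs' b hb']
            exact hF2 a ha' b hb' hab
      · intro a ha b hb hab
        rcases eq_or_ne v a with rfl | hav
        · rcases eq_or_ne v b with rfl | hbv
          · rfl
          · exfalso
            have hb' : b ∈ s' := Finset.mem_erase.mpr ⟨Ne.symm hbv, hb⟩
            rw [hFvv, hFs' b hb'] at hab
            have hne : (sz v - sz u) ≠ 0 := by omega
            have : ∃ x, x ∈ fresh := by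
              refine ⟨m - 1 - 0, ?_⟩
              simp only [hfresh, Finset.mem_image, Finset.mem_range]
              exact ⟨0, by omega, by push_cast; ring⟩
            obtain ⟨x, hx⟩ := this
            have hxv : x ∈ F' b := by
              rw [← hab]
              exact Finset.mem_union_right _ hx
            exact hfresh_new x hx (hFusub b hb' x hxv)
        · have ha' : a ∈ s' := Finset.mem_erase.mpr ⟨Ne.symm hav, ha⟩
          rcases eq_or_ne v b with rfl | hbv
          · exfalso
            rw [hFvv, hFs' a ha'] at hab
            have hne : (sz v - sz u) ≠ 0 := by omega
            have : ∃ x, x ∈ fresh := by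
              refine ⟨m - 1 - 0, ?_⟩
              simp only [hfresh, Finset.mem_image, Finset.mem_range]
              exact ⟨0, by omega, by push_cast; ring⟩
            obtain ⟨x, hx⟩ := this
            have hxv : x ∈ F' a := by
              rw [hab]
              exact Finset.mem_union_right _ hx
            exact hfresh_new x hx (hFusub a ha' x hxv)
          · have hb' : b ∈ s' := Finset.mem_erase.mpr ⟨Ne.symm hbv, hb⟩
            rw [hFs' a ha', hFs' b hb'] at hab
            exact hF3 a ha' b hb' hab
    · -- v ⋖ u : go down
      have hgap : sz v < sz u := hsz2 v u hcov
      set cands : Finset (Finset ℤ) := (F' u).powersetCard (sz v) with hcands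
      have hccard : cands.card = (sz u).choose (sz v) := by
        rw [hcands, Finset.card_powersetCard, (hF1 u hus).2]
      have hbig : ((s'.image F')).card < cands.card := by
        have h1 : (s'.image F').card ≤ s'.card := Finset.card_image_le
        have h2 : s'.card < Fintype.card α := by
          calc s'.card < s.card := Finset.card_lt_card hss
            _ ≤ Fintype.card α := Finset.card_le_univ s
        have h3 : (sz v + 1).choose (sz v) ≤ (sz u).choose (sz v) :=
          Nat.choose_le_choose _ (by omega)
        rw [Nat.choose_succ_self_right] at h3
        have := hsz1 v
        omega
      have : ¬ (cands ⊆ s'.image F') := by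
        intro hsub
        exact absurd (Finset.card_le_card hsub) (by omega)
      obtain ⟨c, hc, hcnot⟩ := Finset.not_subset.mp this
      have hcsub : c ⊆ F' u ∧ c.card = sz v := Finset.mem_powersetCard.mp hc
      set F : α → Finset ℤ := Function.update F' v c with hF
      have hFs' : ∀ w ∈ s', F w = F' w := by
        intro w hw
        have : w ≠ v := Finset.ne_of_mem_erase hw
        simp [hF, Function.update_of_ne this]
      have hFvv : F v = c := by simp [hF]
      refine ⟨F, ?_, ?_, ?_⟩
      · intro a ha
        rcases eq_or_ne v a with rfl | hav
        · rw [hFvv]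
          exact ⟨fun x hx => (hF1 u hus).1 x (hcsub.1 hx), hcsub.2⟩
        · have ha' : a ∈ s' := Finset.mem_erase.mpr ⟨Ne.symm hav, ha⟩
          rw [hFs' a ha']
          exact hF1 a ha'
      · intro a ha b hb hab
        rcases eq_or_ne v a with rfl | hav
        · rcases eq_or_ne v b with rfl | hbv
          · exact absurd hab.lt (lt_irrefl _)
          · have hb' : b ∈ s' := Finset.mem_erase.mpr ⟨Ne.symm hbv, hb⟩
            have hbu : b = u := hvnotadj b hb' (Or.inl hab)
            rw [hFvv, hFs' b hb', hbu]
            exact hcsub.1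
        · have ha' : a ∈ s' := Finset.mem_erase.mpr ⟨Ne.symm hav, ha⟩
          rcases eq_or_ne v b with rfl | hbv
          · have : a = u := huniq a ha' (Or.inl hab)
            subst this
            exact absurd (hcov.lt.trans hab.lt) (lt_irrefl _)
          · have hb' : b ∈ s' := Finset.mem_erase.mpr ⟨Ne.symm hbv, hb⟩
            rw [hFs' a ha', hFs' b hb']
            exact hF2 a ha' b hb' hab
      · intro a ha b hb hab
        rcases eq_or_ne v a with rfl | hav
        · rcases eq_or_ne v b with rfl | hbv
          · rfl
          · exfalso
            have hb' : b ∈ s' := Finset.mem_erase.mpr ⟨Ne.symm hbv, hb⟩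
            rw [hFvv, hFs' b hb'] at hab
            exact hcnot (Finset.mem_image.mpr ⟨b, hb', hab.symm⟩)
        · have ha' : a ∈ s' := Finset.mem_erase.mpr ⟨Ne.symm hav, ha⟩
          rcases eq_or_ne v b with rfl | hbv
          · exfalso
            rw [hFvv, hFs' a ha'] at hab
            exact hcnot (Finset.mem_image.mpr ⟨a, ha', hab⟩)
          · have hb' : b ∈ s' := Finset.mem_erase.mpr ⟨Ne.symm hbv, hb⟩
            rw [hFs' a ha', hFs' b hb'] at hab
            exact hF3 a ha' b hb' hab

end Build


section Height

variable {α : Type} [Fintype α] [PartialOrder α]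

open Classical in
noncomputable def hgt (a : α) : ℕ :=
  ((Finset.univ.powerset).filter
    (fun c : Finset α => IsChain (· ≤ ·) (c : Set α) ∧ ∀ x ∈ c, x ≤ a)).sup Finset.card

open Classical in
lemma singleton_mem_hgtSet (a : α) : ({a} : Finset α) ∈ (Finset.univ.powerset).filter
    (fun c : Finset α => IsChain (· ≤ ·) (c : Set α) ∧ ∀ x ∈ c, x ≤ a) := by
  rw [Finset.mem_filter]
  refine ⟨Finset.mem_powerset.mpr (Finset.subset_univ _), ?_, ?_⟩
  · simp only [Finset.coe_singleton]
    exact Set.pairwise_singleton a _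
  · intro x hx
    rw [Finset.mem_singleton] at hx
    exact le_of_eq hx

lemma hgt_pos (a : α) : 1 ≤ hgt a := by
  classical
  have := Finset.le_sup (f := Finset.card) (singleton_mem_hgtSet a)
  simpa [hgt] using this

lemma hgt_le {h : ℕ} (hh : ∀ c : Finset α, IsChain (· ≤ ·) (c : Set α) → c.card ≤ h)
    (a : α) : hgt a ≤ h := by
  classical
  apply Finset.sup_le
  intro c hc
  rw [Finset.mem_filter] at hc
  exact hh c hc.2.1

lemma hgt_lt {a b : α} (hab : a < b) : hgt a < hgt b := by
  classical
  obtain ⟨c, hc, heq⟩ := Finset.exists_mem_eq_sup _ ⟨_, singleton_mem_hgtSet a⟩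
    (Finset.card : Finset α → ℕ)
  rw [Finset.mem_filter] at hc
  obtain ⟨-, hchain, hle⟩ := hc
  set c1 : Finset α := insert a c with hc1
  have hc1chain : IsChain (· ≤ ·) (c1 : Set α) := by
    rw [hc1, Finset.coe_insert]
    exact hchain.insert (fun x hx _ => Or.inr (hle x hx))
  have hc1le : ∀ x ∈ c1, x ≤ a := by
    intro x hx
    rcases Finset.mem_insert.mp hx with rfl | hx
    · exact le_refl _
    · exact hle x hx
  set c2 : Finset α := insert b c1 with hc2
  have hbnot : b ∉ c1 := fun hmem => absurd (lt_of_le_of_lt (hc1le b hmem) hab) (lt_irrefl _)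
  have hc2chain : IsChain (· ≤ ·) (c2 : Set α) := by
    rw [hc2, Finset.coe_insert]
    exact hc1chain.insert (fun x hx _ => Or.inr ((hc1le x hx).trans hab.le))
  have hc2mem : c2 ∈ (Finset.univ.powerset).filter
      (fun c : Finset α => IsChain (· ≤ ·) (c : Set α) ∧ ∀ x ∈ c, x ≤ b) := by
    rw [Finset.mem_filter]
    refine ⟨Finset.mem_powerset.mpr (Finset.subset_univ _), hc2chain, ?_⟩
    intro x hx
    rcases Finset.mem_insert.mp hx with rfl | hx
    · exact le_refl _
    · exact (hc1le x hx).trans hab.le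
  have h2 : hgt b ≥ c2.card := Finset.le_sup (f := Finset.card) hc2mem
  have h3 : c2.card = c1.card + 1 := Finset.card_insert_of_notMem hbnot
  have h4 : c.card ≤ c1.card := Finset.card_le_card (Finset.subset_insert _ _)
  have h5 : hgt a = c.card := heq
  omega

end Height


/-- If the Hasse diagram of a finite poset `P` of height `h` is a tree, then the union
of any `h` distinct levels of `Mon(ℤ)` contains `P` as a subposet; consequently
`l(P) = h - 1`: some `h-1` distinct levels have `P`-free union, while no `h` distinct
levels do. -/
theorem stmt_15 (α : Type) [Fintype α] [PartialOrder α] (h : ℕ)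
    (hh : HasHeight α h) (htree : (SimpleGraph.hasse α).IsTree) :
    (∀ L : Fin h → Set MonZ, (∀ i, IsLevel (L i)) → Function.Injective L →
      ∃ f : α → MonZ, Function.Injective f ∧ (∀ a, f a ∈ ⋃ i, L i) ∧
        ∀ a b : α, a ≤ b → f a ≤ f b) ∧
    (∃ L : Fin (h - 1) → Set MonZ, (∀ i, IsLevel (L i)) ∧ Function.Injective L ∧
      ¬ ∃ f : α → MonZ, Function.Injective f ∧ (∀ a, f a ∈ ⋃ i, L i) ∧
        ∀ a b : α, a ≤ b → f a ≤ f b) := by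
  classical
  haveI hne : Nonempty α := htree.isConnected.nonempty
  have hpos : 1 ≤ h := by
    obtain ⟨a⟩ := hne
    have := hh.2 {a} (by simp only [Finset.coe_singleton]; exact Set.pairwise_singleton a _)
    simpa using this
  constructor
  · intro L hL Linj
    -- level data
    have hgex : ∀ i, ∃ g, g ∈ L i := fun i => MonZ.level_nonempty (hL i)
    choose g hg using hgex
    set k : Fin h → ℤ := fun i => MonZ.diff (g i) MonZ.base with hk
    have hLk : ∀ i, L i = MonZ.Lev (k i) := fun i => MonZ.level_eq_Lev (hL i) (hg i)
    have kinj : Function.Injective k := by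
      intro i j hij
      apply Linj
      rw [hLk i, hLk j, hij]
    set C : Finset ℤ := Finset.image k Finset.univ with hC
    have hCcard : C.card = h := by
      rw [hC, Finset.card_image_of_injective _ kinj, Finset.card_univ, Fintype.card_fin]
    set e : Fin h → ℤ := fun i => (C.orderIsoOfFin hCcard i : ℤ) with he
    have hemono : StrictMono e := fun i j hij => by
      have := (C.orderIsoOfFin hCcard).strictMono hij
      exact_mod_cast this
    have hπ : ∀ i : Fin h, ∃ j : Fin h, k j = e i := by
      intro i
      have : (e i) ∈ C := (C.orderIsoOfFin hCcard i).2
      obtain ⟨j, _, hj⟩ := Finset.mem_image.mp this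
      exact ⟨j, hj⟩
    choose π hπ using hπ
    -- height into Fin h
    have hgtle : ∀ a : α, hgt a ≤ h := hgt_le hh.2
    set hgtF : α → Fin h := fun a => ⟨hgt a - 1, by have := hgt_pos a; have := hgtle a; omega⟩
      with hgtF_def
    -- constants
    set i0 : Fin h := ⟨0, hpos⟩ with hi0
    set K : ℤ := max 0 ((Fintype.card α : ℤ) + 1 - e i0) with hKdef
    have hK0 : 0 ≤ K := le_max_left _ _
    have heK : ∀ i : Fin h, (Fintype.card α : ℤ) + 1 ≤ e i + K := by
      intro i
      have h1 : e i0 ≤ e i := hemono.monotone (by simp [hi0, Fin.le_def])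
      have h2 : (Fintype.card α : ℤ) + 1 - e i0 ≤ K := le_max_right _ _
      linarith
    set sz : α → ℕ := fun a => (e (hgtF a) + K).toNat with hsz
    have hsz1 : ∀ a : α, Fintype.card α + 1 ≤ sz a := by
      intro a
      have := heK (hgtF a)
      simp only [hsz]
      omega
    have hsz2 : ∀ a b : α, a ⋖ b → sz a < sz b := by
      intro a b hab
      have h1 : hgt a < hgt b := hgt_lt hab.lt
      have h2 : hgtF a < hgtF b := by
        simp only [hgtF_def, Fin.mk_lt_mk]
        have := hgt_pos a
        omega
      have h3 := hemono h2
      have h4 := heK (hgtF a)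
      simp only [hsz]
      omega
    obtain ⟨F, hF1, hF2, hF3⟩ := build htree (Classical.arbitrary α) sz hsz1 hsz2
      Finset.univ (by simp)
    have hFneg : ∀ a : α, ∀ x ∈ F a, x < K := by
      intro a x hx
      have := (hF1 a (Finset.mem_univ a)).1 x hx
      omega
    refine ⟨fun a => MonZ.E K (F a), ?_, ?_, ?_⟩
    · intro a b hab
      exact hF3 a (Finset.mem_univ a) b (Finset.mem_univ b)
        (MonZ.E_inj (hFneg a) (hFneg b) hab)
    · intro a
      apply Set.mem_iUnion.mpr
      refine ⟨π (hgtF a), ?_⟩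
      rw [hLk, hπ]
      rw [MonZ.mem_Lev]
      have h1 : MonZ.diff (MonZ.E K (F a)) (MonZ.E K ∅) = (F a).card - 0 := by
        rw [MonZ.diff_E_E (hFneg a) (by simp)]
        simp
      have h2 : MonZ.diff (MonZ.E K ∅) MonZ.base = 0 - K := by
        rw [MonZ.base, MonZ.diff_E_empty]
      have h3 := MonZ.diff_add_diff (MonZ.E K (F a)) (MonZ.E K ∅) MonZ.base
      have h4 : (F a).card = sz a := (hF1 a (Finset.mem_univ a)).2
      have h5 := heK (hgtF a)
      rw [h1, h2] at h3
      rw [← h3, h4]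
      simp only [hsz]
      omega
    · intro a b hab
      letI : @DecidableRel α α (· < ·) := fun _ _ => Classical.propDecidable _
      letI := Fintype.toLocallyFiniteOrder (α := α)
      have hrtg : Relation.ReflTransGen (· ⋖ ·) a b := le_iff_reflTransGen_covBy.mp hab
      have hsub : F a ⊆ F b := by
        clear hab
        induction hrtg with
        | refl => exact subset_rfl
        | tail hrel hcov ih =>
          exact ih.trans (hF2 _ (Finset.mem_univ _) _ (Finset.mem_univ _) hcov)
      exact MonZ.E_mono hsub
  · exact part2 α h hh
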